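/- A parameterized decomposition with quadratic parameters γ ∈ ℝ^{|Ē|} is a convex decomposition if and only if for every directed edge {i,j}: γᵢⱼ > 0, Γᵢⱼ²γᵢⱼγⱼᵢ ≥ 1, and 1 − Σ_{i∈N(j)} Γᵢⱼ²γᵢⱼ > 0 for every vertex j. -/

import Mathlib

open Classical Finset Matrix Filter


lemma quad1_strict_iff (c d : ℝ) :
    StrictConvexOn ℝ Set.univ (fun x : ℝ => (1/2)*c*x^2 - d*x) ↔ 0 < c := by
  constructor
  · intro hc
    have h := hc.2 (Set.mem_univ (1:ℝ)) (Set.mem_univ (-1:ℝ)) (by norm_num)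
      (by norm_num : (0:ℝ) < 1/2) (by norm_num : (0:ℝ) < 1/2) (by norm_num)
    simp only [smul_eq_mul] at h
    nlinarith [h]
  · intro hc
    refine ⟨convex_univ, ?_⟩
    intro x _ y _ hxy s t hs ht hst
    simp only [smul_eq_mul]
    have hxy' : x - y ≠ 0 := sub_ne_zero.2 hxy
    have hsq : 0 < (x - y)^2 := by positivity
    have ht' : t = 1 - s := by linarith
    subst ht'
    nlinarith [mul_pos (mul_pos hs ht) (mul_pos hc hsq)]

lemma quad2_convex_iff (a b c d e : ℝ) :
    ConvexOn ℝ Set.univ (fun p : ℝ × ℝ =>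
      (1/2)*(a*p.1^2 + 2*b*p.1*p.2 + c*p.2^2) - d*p.1 - e*p.2) ↔
    0 ≤ a ∧ 0 ≤ c ∧ b^2 ≤ a*c := by
  constructor
  · intro hc
    have key : ∀ x y : ℝ, 0 ≤ a*x^2 + 2*b*x*y + c*y^2 := by
      intro x y
      have h := hc.2 (Set.mem_univ ((x, y) : ℝ×ℝ)) (Set.mem_univ ((-x, -y) : ℝ×ℝ))
        (by norm_num : (0:ℝ) ≤ 1/2) (by norm_num : (0:ℝ) ≤ 1/2) (by norm_num)
      simp [Prod.smul_mk, smul_eq_mul, Prod.mk_add_mk] at h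
      nlinarith [h]
    have ha : 0 ≤ a := by have := key 1 0; nlinarith
    have hcc : 0 ≤ c := by have := key 0 1; nlinarith
    refine ⟨ha, hcc, ?_⟩
    rcases eq_or_lt_of_le ha with h0 | hpos
    · have hb : b = 0 := by
        by_contra hb
        have := key (-(c+1)/(2*b)) 1
        rw [← h0] at this
        field_simp at this
        rw [le_div_iff₀ (lt_of_le_of_ne (sq_nonneg b) (Ne.symm (pow_ne_zero 2 hb)))] at this
        nlinarith [sq_nonneg b, sq_nonneg (c+1), lt_of_le_of_ne (sq_nonneg b) (Ne.symm (pow_ne_zero 2 hb))]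
      rw [hb, ← h0]; nlinarith
    · have := key (-b) a
      nlinarith
  · rintro ⟨ha, hcc, hb⟩
    refine ⟨convex_univ, ?_⟩
    intro x _ y _ s t hs ht hst
    simp only [Prod.smul_fst, Prod.smul_snd, Prod.fst_add, Prod.snd_add, smul_eq_mul]
    have h1 : 0 ≤ a*(x.1-y.1)^2 + 2*b*(x.1-y.1)*(x.2-y.2) + c*(x.2-y.2)^2 := by
      rcases eq_or_lt_of_le ha with h0 | hpos
      · have hb2 : b^2 = 0 := le_antisymm (by nlinarith) (sq_nonneg b)
        have hb0 : b = 0 := by nlinarith [sq_nonneg b]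
        rw [hb0, ← h0]; nlinarith [sq_nonneg (x.2-y.2)]
      · nlinarith [sq_nonneg (a*(x.1-y.1)+b*(x.2-y.2)),
          mul_nonneg (sub_nonneg.2 hb) (sq_nonneg (x.2-y.2))]
    have ht' : t = 1 - s := by linarith
    subst ht'
    nlinarith [mul_nonneg (mul_nonneg hs ht) h1]


noncomputable section

/-- `i` and `j` are adjacent: there is an edge `(i,j) ∈ E` (recall `Γᵢⱼ ≠ 0` iff `(i,j) ∈ E`). -/
def Adj {n : ℕ} (Γ : Matrix (Fin n) (Fin n) ℝ) (i j : Fin n) : Prop :=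
  i ≠ j ∧ Γ i j ≠ 0

/-- The neighbors `N(j)` of a vertex `j`. -/
def nbrs {n : ℕ} (Γ : Matrix (Fin n) (Fin n) ℝ) (j : Fin n) : Finset (Fin n) :=
  Finset.univ.filter (fun i => Adj Γ i j)

/-- `Σ_{u ∈ N(i)\{j}} Γ_{ui}² γ_{ui}`. -/
def Ssum {n : ℕ} (Γ : Matrix (Fin n) (Fin n) ℝ) (γ : Fin n → Fin n → ℝ)
    (i j : Fin n) : ℝ :=
  ∑ u ∈ Finset.univ.filter (fun u => Adj Γ u i ∧ u ≠ j), (Γ u i) ^ 2 * γ u i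

/-- The min-sum quadratic parameter operator `F_{ij}(γ) = 1/(1 − Σ_{u∈N(i)\{j}} Γ_{ui}² γ_{ui})`. -/
def Fop {n : ℕ} (Γ : Matrix (Fin n) (Fin n) ℝ) (γ : Fin n → Fin n → ℝ) :
    Fin n → Fin n → ℝ :=
  fun i j => 1 / (1 - Ssum Γ γ i j)

/-- The domain `D` of the operator `F`. -/
def DomD {n : ℕ} (Γ : Matrix (Fin n) (Fin n) ℝ) : Set (Fin n → Fin n → ℝ) :=
  {γ | ∀ i j, Adj Γ i j → Ssum Γ γ i j < 1}

/-- `v` is the quadratic-parameter vector of a convex decomposition: `v > 0` on edges,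
`Γᵢⱼ²vᵢⱼvⱼᵢ ≥ 1` on edges, and `Σ_{i∈N(j)} Γᵢⱼ²vᵢⱼ < 1` at every vertex. -/
def ConvVec {n : ℕ} (Γ : Matrix (Fin n) (Fin n) ℝ) (v : Fin n → Fin n → ℝ) : Prop :=
  (∀ i j, Adj Γ i j → 0 < v i j) ∧
  (∀ i j, Adj Γ i j → 1 ≤ (Γ i j) ^ 2 * v i j * v j i) ∧
  (∀ j, ∑ i ∈ nbrs Γ j, (Γ i j) ^ 2 * v i j < 1)

/-- The parameterized decomposition with quadratic parameters `γ` (and arbitrary linear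
parameters `z`) is a convex decomposition (each pairwise term convex, each single-vertex
term strictly convex) iff `γᵢⱼ > 0` and `Γᵢⱼ²γᵢⱼγⱼᵢ ≥ 1` on every directed edge, and
`1 − Σ_{i∈N(j)} Γᵢⱼ²γᵢⱼ > 0` at every vertex. -/
theorem stmt2 {n : ℕ} (Γ : Matrix (Fin n) (Fin n) ℝ) (hsym : Γ.IsSymm)
    (hdiag : ∀ i, Γ i i = 1)
    (γ z : Fin n → Fin n → ℝ) (h : Fin n → ℝ) :
    ((∀ i j, Adj Γ i j →
        ConvexOn ℝ Set.univ (fun p : ℝ × ℝ =>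
          (1 / 2) * (γ j i * (Γ i j) ^ 2 * p.1 ^ 2 + 2 * Γ i j * p.1 * p.2
              + γ i j * (Γ i j) ^ 2 * p.2 ^ 2)
            - z j i * p.1 - z i j * p.2)) ∧
      (∀ j, StrictConvexOn ℝ Set.univ (fun x : ℝ =>
          (1 / 2) * (1 - ∑ i ∈ nbrs Γ j, (Γ i j) ^ 2 * γ i j) * x ^ 2
            - (h j - ∑ i ∈ nbrs Γ j, z i j) * x)))
    ↔
    ((∀ i j, Adj Γ i j → 0 < γ i j ∧ 1 ≤ (Γ i j) ^ 2 * γ i j * γ j i) ∧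
      (∀ j, 0 < 1 - ∑ i ∈ nbrs Γ j, (Γ i j) ^ 2 * γ i j)) := by
  constructor
  · rintro ⟨h1, h2⟩
    refine ⟨?_, fun j => (quad1_strict_iff _ _).mp (h2 j)⟩
    intro i j hij
    have hΓ : Γ i j ≠ 0 := hij.2
    have hΓ2 : 0 < (Γ i j)^2 := by positivity
    obtain ⟨ha, hc, hb⟩ := (quad2_convex_iff _ _ _ _ _).mp (h1 i j hij)
    have hprod : 1 ≤ (Γ i j)^2 * γ i j * γ j i := by nlinarith
    have hγpos : 0 < γ i j := by nlinarith
    exact ⟨hγpos, hprod⟩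
  · rintro ⟨h1, h2⟩
    refine ⟨?_, fun j => (quad1_strict_iff _ _).mpr (h2 j)⟩
    intro i j hij
    have hΓ : Γ i j ≠ 0 := hij.2
    have hΓ2 : 0 < (Γ i j)^2 := by positivity
    have hΓji : Γ j i = Γ i j := hsym.apply i j
    have hji : Adj Γ j i := ⟨hij.1.symm, by rw [hΓji]; exact hΓ⟩
    obtain ⟨hpij, hprodij⟩ := h1 i j hij
    obtain ⟨hpji, _⟩ := h1 j i hji
    refine (quad2_convex_iff _ _ _ _ _).mpr ⟨by positivity, by positivity, ?_⟩
    nlinarith [mul_nonneg (by linarith : (0:ℝ) ≤ (Γ i j)^2 * γ i j * γ j i - 1) hΓ2.le]
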